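/- Telescoping identification under parallel trends through baseline covariates (Section 3 derivation, first reduction): Under parallel trends, for every t ∈ {1,…,τ}, μ_t = E[Y_0(ā*)] + Σ_{k=1}^t Σ_{w_0} E[Y_k(ā*) − Y_{k−1}(ā*) | A_0 = a*_0, W_0 = w_0] · P(W_0 = w_0), the inner sum over w_0 with P(W_0 = w_0, A_0 = a*_0) > 0, provided P(W_0 = w_0) > 0 implies P(W_0 = w_0, A_0 = a*_0) > 0 (which holds in particular under a staggered discontinuation design). -/

import Mathlib

open MeasureTheory
open scoped Classical

namespace DID

variable {Ω 𝒲 𝒜 : Type*}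

/-- Event: the covariate history `W̄_{n-1}` equals `w` (i.e. `W_s = w_s` for `s = 0,…,n-1`). -/
def Whist (W : ℕ → Ω → 𝒲) {n : ℕ} (w : Fin n → 𝒲) : Set Ω :=
  {ω | ∀ s : Fin n, W s ω = w s}

/-- Event: the treatment history `Ā_{n-1}` equals the plan `a` (for `n = 0`, the whole space). -/
def Ahist (A : ℕ → Ω → 𝒜) (a : ℕ → 𝒜) (n : ℕ) : Set Ω :=
  {ω | ∀ s, s < n → A s ω = a s}

/-- Restriction of a history to its first `m` coordinates. -/
def prefixF {α : Type*} {n : ℕ} (w : Fin n → α) {m : ℕ} (h : m ≤ n) : Fin m → α :=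
  fun i => w (Fin.castLE h i)

/-- The observed covariate history `W̄_{n-1}(ω)`. -/
def obsHist (W : ℕ → Ω → 𝒲) (n : ℕ) (ω : Ω) : Fin n → 𝒲 := fun i => W i ω

variable [MeasurableSpace Ω]

/-- Conditional expectation `E[X | B]` of `X` given the event `B`. -/
noncomputable def cexp (P : Measure Ω) (X : Ω → ℝ) (B : Set Ω) : ℝ :=
  (∫ ω in B, X ω ∂P) / (P B).toReal

/-- Conditional probability `P(C | B)`. -/
noncomputable def cprob (P : Measure Ω) (C B : Set Ω) : ℝ :=
  (P (C ∩ B)).toReal / (P B).toReal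

/-- `∏_{m=0}^k P(W_m = w_m | W̄_{m-1} = w̄_{m-1}, Ā_{m-1} = ā*_{m-1})`. -/
noncomputable def wgt (P : Measure Ω) (W : ℕ → Ω → 𝒲) (A : ℕ → Ω → 𝒜) (a : ℕ → 𝒜)
    (k : ℕ) (w : Fin (k + 1) → 𝒲) : ℝ :=
  ∏ m : Fin (k + 1),
    cprob P {ω | W m ω = w m}
      (Whist W (prefixF w (le_of_lt m.isLt)) ∩ Ahist A a m)

/-- Staggered discontinuation design: `P(A_0 = a*_0) = 1`. -/
def Staggered (P : Measure Ω) (A : ℕ → Ω → 𝒜) (a : ℕ → 𝒜) : Prop :=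
  P {ω | A 0 ω = a 0} = 1

/-- SUTVA: a.s., if `Ā_t = ā*_t` then `Y_t = Y_t(ā*)`. -/
def SUTVA (P : Measure Ω) (A : ℕ → Ω → 𝒜) (a : ℕ → 𝒜) (Y Ystar : ℕ → Ω → ℝ)
    (τ : ℕ) : Prop :=
  ∀ t ≤ τ, ∀ᵐ ω ∂P, (∀ s ≤ t, A s ω = a s) → Y t ω = Ystar t ω

/-- Positivity. -/
def Positivity (P : Measure Ω) (W : ℕ → Ω → 𝒲) (A : ℕ → Ω → 𝒜) (a : ℕ → 𝒜)
    (τ : ℕ) : Prop :=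
  ∀ t, 1 ≤ t → t ≤ τ → ∀ w : Fin (t + 1) → 𝒲,
    0 < P (Whist W w ∩ Ahist A a t) → 0 < P (Whist W w ∩ Ahist A a (t + 1))

/-- Parallel trends. -/
def ParallelTrends (P : Measure Ω) (W : ℕ → Ω → 𝒲) (A : ℕ → Ω → 𝒜) (a : ℕ → 𝒜)
    (Ystar : ℕ → Ω → ℝ) (τ : ℕ) : Prop :=
  ∀ t, 1 ≤ t → t ≤ τ → ∀ k, k ≤ t → ∀ w : Fin (k + 1) → 𝒲,
    0 < P (Whist W w ∩ Ahist A a (k + 1)) →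
      cexp P (fun ω => Ystar t ω - Ystar (t - 1) ω) (Whist W w ∩ Ahist A a k) =
        cexp P (fun ω => Ystar t ω - Ystar (t - 1) ω) (Whist W w ∩ Ahist A a (k + 1))

/-- The g-formula `φ_{j,k}`. -/
noncomputable def gphi (P : Measure Ω) (W : ℕ → Ω → 𝒲) (A : ℕ → Ω → 𝒜) (a : ℕ → 𝒜)
    (Y : ℕ → Ω → ℝ) (j k : ℕ) : ℝ :=
  ∑' w : Fin (k + 1) → 𝒲,
    if 0 < P (Whist W w ∩ Ahist A a (k + 1)) then
      cexp P (Y j) (Whist W w ∩ Ahist A a (k + 1)) * wgt P W A a k w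
    else 0

/-- The parallel trends g-formula `ψ_t`. -/
noncomputable def psi (P : Measure Ω) (W : ℕ → Ω → 𝒲) (A : ℕ → Ω → 𝒜) (a : ℕ → 𝒜)
    (Y : ℕ → Ω → ℝ) (t : ℕ) : ℝ :=
  (∫ ω, Y 0 ω ∂P) +
    ∑ k ∈ Finset.Icc 1 t, ∑' w : Fin (k + 1) → 𝒲,
      if 0 < P (Whist W w ∩ Ahist A a (k + 1)) then
        cexp P (fun ω => Y k ω - Y (k - 1) ω) (Whist W w ∩ Ahist A a (k + 1)) *
          wgt P W A a k w
      else 0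


lemma Whist_one (W : ℕ → Ω → 𝒲) (w0 : 𝒲) :
    Whist W (fun _ : Fin 1 => w0) = {ω | W 0 ω = w0} := by
  ext ω; simp [Whist, Fin.forall_fin_one]

lemma Ahist_zero (A : ℕ → Ω → 𝒜) (a : ℕ → 𝒜) : Ahist A a 0 = Set.univ := by
  ext ω; simp [Ahist]

lemma Ahist_one (A : ℕ → Ω → 𝒜) (a : ℕ → 𝒜) : Ahist A a 1 = {ω | A 0 ω = a 0} := by
  ext ω; simp [Ahist, Nat.lt_one_iff]

/-- **Telescoping identification under parallel trends through baseline covariates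
(Section 3 derivation, first reduction).** Under parallel trends, for every
`t ∈ {1,…,τ}`,
`μ_t = E[Y_0(ā*)] + Σ_{k=1}^t Σ_{w_0} E[Y_k(ā*) − Y_{k−1}(ā*) | A_0 = a*_0, W_0 = w_0]
· P(W_0 = w_0)`, the inner sum over `w_0` with `P(W_0 = w_0, A_0 = a*_0) > 0`, provided
`P(W_0 = w_0) > 0` implies `P(W_0 = w_0, A_0 = a*_0) > 0` (which holds in particular under
a staggered discontinuation design). -/
theorem telescoping_first_reduction
    [MeasurableSpace 𝒲] [MeasurableSingletonClass 𝒲] [Countable 𝒲]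
    [MeasurableSpace 𝒜] [MeasurableSingletonClass 𝒜] [Countable 𝒜]
    (P : Measure Ω) [IsProbabilityMeasure P] (τ : ℕ)
    (W : ℕ → Ω → 𝒲) (A : ℕ → Ω → 𝒜) (Ystar : ℕ → Ω → ℝ) (a : ℕ → 𝒜)
    (hWmeas : ∀ t, Measurable (W t)) (hAmeas : ∀ t, Measurable (A t))
    (hYstar : ∀ t ≤ τ, Integrable (Ystar t) P)
    (hpt : ParallelTrends P W A a Ystar τ)
    (hW0 : ∀ w0 : 𝒲, 0 < P {ω | W 0 ω = w0} →
      0 < P ({ω | W 0 ω = w0} ∩ {ω | A 0 ω = a 0})) :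
    ∀ t, 1 ≤ t → t ≤ τ →
      (∫ ω, Ystar t ω ∂P) =
        (∫ ω, Ystar 0 ω ∂P) +
          ∑ k ∈ Finset.Icc 1 t, ∑' w0 : 𝒲,
            if 0 < P ({ω | W 0 ω = w0} ∩ {ω | A 0 ω = a 0}) then
              cexp P (fun ω => Ystar k ω - Ystar (k - 1) ω)
                  ({ω | W 0 ω = w0} ∩ {ω | A 0 ω = a 0}) *
                (P {ω | W 0 ω = w0}).toReal
            else 0 := by
  intro t ht1 ht2
  -- notation
  have key : ∀ k, 1 ≤ k → k ≤ τ →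
      (∫ ω, (Ystar k ω - Ystar (k - 1) ω) ∂P) =
        ∑' w0 : 𝒲,
          if 0 < P ({ω | W 0 ω = w0} ∩ {ω | A 0 ω = a 0}) then
            cexp P (fun ω => Ystar k ω - Ystar (k - 1) ω)
                ({ω | W 0 ω = w0} ∩ {ω | A 0 ω = a 0}) *
              (P {ω | W 0 ω = w0}).toReal
          else 0 := by
    intro k hk1 hk2
    set f : Ω → ℝ := fun ω => Ystar k ω - Ystar (k - 1) ω with hf
    have hfint : Integrable f P :=
      (hYstar k hk2).sub (hYstar (k - 1) (le_trans (Nat.sub_le k 1) hk2))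
    have msW : ∀ w0 : 𝒲, MeasurableSet {ω | W 0 ω = w0} := fun w0 =>
      (hWmeas 0) (measurableSet_singleton w0)
    have hUnion : (⋃ w0 : 𝒲, {ω | W 0 ω = w0}) = Set.univ := by
      ext ω; simp
    have hdisj : Pairwise (Function.onFun Disjoint (fun w0 : 𝒲 => {ω | W 0 ω = w0})) := by
      intro x y hxy
      refine Set.disjoint_left.2 fun ω hx hy => hxy ?_
      simp only [Set.mem_setOf_eq] at hx hy
      rw [← hx, ← hy]
    have hsum : HasSum (fun w0 : 𝒲 => ∫ ω in {ω | W 0 ω = w0}, f ω ∂P)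
        (∫ ω in ⋃ w0 : 𝒲, {ω | W 0 ω = w0}, f ω ∂P) :=
      MeasureTheory.hasSum_integral_iUnion msW hdisj
        (by rw [hUnion]; exact hfint.integrableOn)
    rw [hUnion] at hsum
    have h1 : (∫ ω, f ω ∂P) = ∑' w0 : 𝒲, ∫ ω in {ω | W 0 ω = w0}, f ω ∂P := by
      rw [hsum.tsum_eq, MeasureTheory.setIntegral_univ]
    rw [h1]
    congr 1
    funext w0
    by_cases hpos : 0 < P {ω | W 0 ω = w0}
    · have hposI := hW0 w0 hpos
      rw [if_pos hposI]
      -- parallel trends at k' = 0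
      have hpt0 := hpt k hk1 hk2 0 (Nat.zero_le k) (fun _ : Fin 1 => w0)
      rw [Whist_one, Ahist_zero, Ahist_one] at hpt0
      have hpt0' := hpt0 hposI
      rw [Set.inter_univ] at hpt0'
      rw [← hpt0']
      have hne : (P {ω | W 0 ω = w0}).toReal ≠ 0 := by
        have hfin : P {ω | W 0 ω = w0} ≠ ⊤ := measure_ne_top P _
        simp [ENNReal.toReal_eq_zero_iff, hpos.ne', hfin]
      rw [cexp, div_mul_cancel₀ _ hne]
    · rw [if_neg, MeasureTheory.Measure.restrict_eq_zero.2, integral_zero_measure]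
      · exact le_antisymm (le_of_not_gt hpos) zero_le
      · intro h
        exact hpos (lt_of_lt_of_le h (measure_mono Set.inter_subset_left))
  have htele : (∫ ω, Ystar t ω ∂P) - (∫ ω, Ystar 0 ω ∂P) =
      ∑ k ∈ Finset.Icc 1 t, (∫ ω, (Ystar k ω - Ystar (k - 1) ω) ∂P) := by
    have : ∀ k ∈ Finset.Icc 1 t,
        (∫ ω, (Ystar k ω - Ystar (k - 1) ω) ∂P) =
          (∫ ω, Ystar k ω ∂P) - (∫ ω, Ystar (k - 1) ω ∂P) := by
      intro k hk
      simp only [Finset.mem_Icc] at hk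
      exact integral_sub (hYstar k (le_trans hk.2 ht2))
        (hYstar (k - 1) (le_trans (Nat.sub_le k 1) (le_trans hk.2 ht2)))
    rw [Finset.sum_congr rfl this]
    have : ∑ k ∈ Finset.Icc 1 t,
        ((∫ ω, Ystar k ω ∂P) - (∫ ω, Ystar (k - 1) ω ∂P)) =
        ∑ i ∈ Finset.range t,
          ((∫ ω, Ystar (i + 1) ω ∂P) - (∫ ω, Ystar i ω ∂P)) := by
      rw [show Finset.Icc 1 t = Finset.Ico 1 (t + 1) by rfl,
        Finset.sum_Ico_eq_sum_range]
      simp [Nat.add_sub_cancel, add_comm]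
    rw [this, Finset.sum_range_sub (fun n => ∫ ω, Ystar n ω ∂P)]
  have hsum : ∑ k ∈ Finset.Icc 1 t, (∫ ω, (Ystar k ω - Ystar (k - 1) ω) ∂P) =
      ∑ k ∈ Finset.Icc 1 t, ∑' w0 : 𝒲,
        if 0 < P ({ω | W 0 ω = w0} ∩ {ω | A 0 ω = a 0}) then
          cexp P (fun ω => Ystar k ω - Ystar (k - 1) ω)
              ({ω | W 0 ω = w0} ∩ {ω | A 0 ω = a 0}) *
            (P {ω | W 0 ω = w0}).toReal
        else 0 := by
    refine Finset.sum_congr rfl fun k hk => ?_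
    simp only [Finset.mem_Icc] at hk
    exact key k hk.1 (le_trans hk.2 ht2)
  linarith [htele, hsum]

end DID
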